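/- arXiv:2011.04869 — 6 statements merged into one kernel-verified Lean document; each statement's English description precedes it below -/
import Mathlib

section
/- Positive definiteness of the shifted Hessian at an index-1 saddle: let E be a real inner product space, let H : E → E be a symmetric linear map (⟨H a, b⟩ = ⟨a, H b⟩ for all a, b), let v ∈ E with ‖v‖ = 1 and H v = λ · v for some λ < 0, and suppose H is positive definite on the orthogonal complement of v, i.e. ⟨w, H w⟩ > 0 for every nonzero w with ⟨w, v⟩ = 0. Then for every real c > 1 and every nonzero u ∈ E, ⟨u, H u⟩ − c λ ⟨v, u⟩² > 0; that is, the operator H − c λ v vᵀ is positive definite. -/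
open RealInnerProductSpace

/-- Positive definiteness of the shifted Hessian at an index-1 saddle: if `H` is a
symmetric linear map, `v` a unit eigenvector with eigenvalue `λ < 0`, and `H` is
positive definite on the orthogonal complement of `v`, then for every `c > 1` and every
nonzero `u`, `⟨u, H u⟩ − c λ ⟨v, u⟩² > 0`; i.e. `H − c λ v vᵀ` is positive definite. -/
theorem shifted_hessian_pos_def {E : Type*} [NormedAddCommGroup E]
    [InnerProductSpace ℝ E] (H : E →ₗ[ℝ] E)
    (hHsymm : ∀ a b : E, ⟪H a, b⟫ = ⟪a, H b⟫)
    (v : E) (hv : ‖v‖ = 1) (lam : ℝ) (hlam : lam < 0) (hev : H v = lam • v)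
    (hpos : ∀ w : E, w ≠ 0 → ⟪w, v⟫ = 0 → 0 < ⟪w, H w⟫) :
    ∀ c : ℝ, 1 < c → ∀ u : E, u ≠ 0 → 0 < ⟪u, H u⟫ - c * lam * ⟪v, u⟫ ^ 2 := by
  intro c hc u hu
  set t : ℝ := ⟪v, u⟫ with ht
  set w : E := u - t • v with hw
  have hvv : ⟪v, v⟫ = (1 : ℝ) := by
    rw [real_inner_self_eq_norm_sq, hv]; norm_num
  have hwv : ⟪w, v⟫ = 0 := by
    rw [hw, inner_sub_left, real_inner_smul_left, hvv, real_inner_comm]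
    ring
  have hvw : ⟪v, w⟫ = 0 := by rw [real_inner_comm]; exact hwv
  have hHvw : ⟪v, H w⟫ = 0 := by
    rw [← hHsymm, hev, real_inner_smul_left, hvw]
    ring
  have hwHv : ⟪w, H v⟫ = 0 := by
    rw [hev, real_inner_smul_right, hwv]; ring
  have hu' : u = w + t • v := by rw [hw]; abel
  have key : ⟪u, H u⟫ = ⟪w, H w⟫ + t ^ 2 * lam := by
    rw [hu']
    simp only [map_add, map_smul, inner_add_left, inner_add_right,
      real_inner_smul_left, real_inner_smul_right, hwHv, hHvw]
    rw [hev, real_inner_smul_right, hvv]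
    ring
  rw [key]
  have hwH : 0 ≤ ⟪w, H w⟫ := by
    rcases eq_or_ne w 0 with h | h
    · simp [h]
    · exact (hpos w h hwv).le
  have ht2 : 0 ≤ (1 - c) * lam * t ^ 2 := by
    have : 0 < (1 - c) * lam := mul_pos_of_neg_of_neg (by linarith) hlam
    positivity
  rcases eq_or_ne t 0 with h0 | h0
  · have hwne : w ≠ 0 := by
      rw [hw, h0, zero_smul, sub_zero]; exact hu
    have := hpos w hwne hwv
    nlinarith
  · have : 0 < (1 - c) * lam * t ^ 2 := by
      have h1 : 0 < (1 - c) * lam := mul_pos_of_neg_of_neg (by linarith) hlam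
      positivity
    nlinarith
end

section
/- The saddle point is a strict local minimizer of the IMF auxiliary functional (part (1) of the convergence theorem, with α = 0, β = 2): let E be a finite-dimensional real inner product space and F : E → ℝ be twice continuously differentiable. Suppose φ* ∈ E satisfies ∇F(φ*) = 0, and the second derivative B of F at φ* (a symmetric bilinear form) satisfies: there exist v ∈ E with ‖v‖ = 1 and λ < 0 such that B(v, w) = λ ⟨v, w⟩ for all w ∈ E, and B(w, w) > 0 for every nonzero w with ⟨w, v⟩ = 0 (so φ* is a nondegenerate index-1 saddle point). Define L(φ) = F(φ) − 2 F(φ* + ⟨v, φ − φ*⟩ · v). Then φ* is a strict local minimizer of L: there is ε > 0 such that L(φ) > L(φ*) for all φ ≠ φ* with ‖φ − φ*‖ < ε. -/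
open RealInnerProductSpace

private lemma quad_bound {E : Type*} [NormedAddCommGroup E] [InnerProductSpace ℝ E]
    (C D : E →L[ℝ] E →L[ℝ] ℝ) (u : E) (r ε : ℝ) (hu : ‖u‖ ≤ r) (hC : ‖C - D‖ ≤ ε) :
    |C u u - D u u| ≤ ε * r ^ 2 := by
  have h1 : |(C - D) u u| ≤ ‖(C - D) u‖ * ‖u‖ := by
    simpa using ((C - D) u).le_opNorm u
  have h2 : ‖(C - D) u‖ ≤ ‖C - D‖ * ‖u‖ := (C - D).le_opNorm u
  have h3 : |(C - D) u u| ≤ ‖C - D‖ * ‖u‖ * ‖u‖ := by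
    nlinarith [norm_nonneg u, norm_nonneg ((C - D) u), abs_nonneg ((C - D) u u)]
  have h4 : (C - D) u u = C u u - D u u := by simp
  rw [h4] at h3
  have hr : (0:ℝ) ≤ r := le_trans (norm_nonneg u) hu
  have hε : (0:ℝ) ≤ ε := le_trans (norm_nonneg (C - D)) hC
  nlinarith [norm_nonneg u, mul_self_le_mul_self (norm_nonneg u) hu]

set_option maxHeartbeats 1000000 in

/-- The saddle point is a strict local minimizer of the IMF auxiliary functional
(part (1) of the convergence theorem, with `α = 0`, `β = 2`): if `φ*` is a
nondegenerate index-1 saddle point of a `C²` functional `F` on a finite-dimensional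
real inner product space (unit min-mode `v` with eigenvalue `λ < 0`, Hessian positive
definite on the orthogonal complement of `v`), then `φ*` is a strict local minimizer of
`L(φ) = F(φ) − 2 F(φ* + ⟨v, φ − φ*⟩ • v)`. -/
theorem saddle_is_strict_local_min_of_aux {E : Type*} [NormedAddCommGroup E]
    [InnerProductSpace ℝ E] [FiniteDimensional ℝ E]
    (F : E → ℝ) (hF : ContDiff ℝ 2 F)
    (φs : E) (hcrit : gradient F φs = 0)
    (v : E) (hv : ‖v‖ = 1) (lam : ℝ) (hlam : lam < 0)
    (hev : ∀ w : E, fderiv ℝ (fderiv ℝ F) φs v w = lam * ⟪v, w⟫)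
    (hpos : ∀ w : E, w ≠ 0 → ⟪w, v⟫ = 0 → 0 < fderiv ℝ (fderiv ℝ F) φs w w) :
    ∃ ε > 0, ∀ φ : E, φ ≠ φs → ‖φ - φs‖ < ε →
      F φs - 2 * F (φs + ⟪v, φs - φs⟫ • v) <
        F φ - 2 * F (φs + ⟪v, φ - φs⟫ • v) := by
  -- basic facts
  have hFd : Differentiable ℝ F := hF.differentiable (by norm_num)
  have hΦ : ContDiff ℝ 1 (fderiv ℝ F) := hF.fderiv_right (by norm_num)
  have hΦd : Differentiable ℝ (fderiv ℝ F) := hΦ.differentiable (by norm_num)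
  set B := fderiv ℝ (fderiv ℝ F) φs with hB
  have hsymm : ∀ a b : E, B a b = B b a :=
    hF.contDiffAt.isSymmSndFDerivAt (by norm_num)
  have hfd0 : fderiv ℝ F φs = 0 := by
    have := congrArg (InnerProductSpace.toDual ℝ E) hcrit
    simpa [gradient] using this
  have hBvv : B v v = lam := by
    have := hev v
    rw [real_inner_self_eq_norm_sq, hv] at this
    simpa using this
  have hcont : Continuous (fderiv ℝ (fderiv ℝ F)) := hΦ.continuous_fderiv one_ne_zero
  -- the quadratic form q
  set q : E → ℝ := fun h => B h h - 2 * lam * ⟪v, h⟫ ^ 2 with hq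
  have hqcont : Continuous q := by
    have h1 : Continuous fun h : E => B h h :=
      B.continuous₂.comp (continuous_id.prodMk continuous_id)
    have h2 : Continuous fun h : E => ⟪v, h⟫ := continuous_const.inner continuous_id
    exact h1.sub (continuous_const.mul (h2.pow 2))
  have hqpos : ∀ h : E, h ≠ 0 → 0 < q h := by
    intro h hh
    set t : ℝ := ⟪v, h⟫ with ht
    set w : E := h - t • v with hw
    have hvw : ⟪v, w⟫ = 0 := by
      simp [hw, inner_sub_right, inner_smul_right, real_inner_self_eq_norm_sq, hv, ht]
    have hBvw : B v w = 0 := by rw [hev w, hvw, mul_zero]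
    have hdecomp : h = w + t • v := by simp [hw]
    have hBhh : B h h = B w w + t ^ 2 * lam := by
      rw [hdecomp]
      simp [map_add, map_smul, ContinuousLinearMap.add_apply, ContinuousLinearMap.smul_apply,
        hBvw, hsymm w v, hBvv, smul_eq_mul]
      ring
    have hqh : q h = B w w - lam * t ^ 2 := by
      simp only [hq]; rw [hBhh, ← ht]; ring
    rcases eq_or_ne w 0 with hw0 | hw0
    · have htne : t ≠ 0 := by
        intro h0
        apply hh
        rw [hdecomp, hw0, h0, zero_smul, add_zero]
      rw [hqh, hw0]
      simp only [map_zero, ContinuousLinearMap.zero_apply, zero_sub]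
      nlinarith [pow_pos (abs_pos.mpr htne) 2, sq_abs t]
    · have hBw : 0 < B w w := hpos w hw0 (by rw [real_inner_comm]; exact hvw)
      rw [hqh]
      nlinarith [sq_nonneg t]
  -- minimum of q on the unit sphere
  obtain ⟨h₀, hh₀s, hh₀min⟩ :=
    (isCompact_sphere (0 : E) 1).exists_isMinOn ⟨v, by simp [hv]⟩ hqcont.continuousOn
  set m : ℝ := q h₀ with hm
  have hh₀ : ‖h₀‖ = 1 := by simpa using hh₀s
  have hmpos : 0 < m := hqpos h₀ (by intro h0; rw [h0] at hh₀; simpa using hh₀)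
  -- q h ≥ m ‖h‖²
  have hqhom : ∀ (c : ℝ) (h : E), q (c • h) = c ^ 2 * q h := by
    intro c h
    simp only [hq, map_smul, ContinuousLinearMap.smul_apply, inner_smul_right, smul_eq_mul]
    ring
  have hqlow : ∀ h : E, m * ‖h‖ ^ 2 ≤ q h := by
    intro h
    rcases eq_or_ne h 0 with h0 | h0
    · simp [h0, hq]
    · have hn : ‖h‖ ≠ 0 := norm_ne_zero_iff.mpr h0
      have hu : ‖(‖h‖⁻¹ • h)‖ = 1 := by
        rw [norm_smul, norm_inv, norm_norm, inv_mul_cancel₀ hn]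
      have h1 : m ≤ q (‖h‖⁻¹ • h) := hh₀min (by simp [hu])
      have h2 : q (‖h‖⁻¹ • h) = (‖h‖⁻¹) ^ 2 * q h := hqhom _ _
      rw [h2] at h1
      have hpos2 : (0:ℝ) < ‖h‖ ^ 2 := by positivity
      rw [← mul_le_mul_iff_of_pos_left hpos2] at h1
      calc m * ‖h‖ ^ 2 = ‖h‖ ^ 2 * m := by ring
        _ ≤ ‖h‖ ^ 2 * ((‖h‖⁻¹) ^ 2 * q h) := h1
        _ = q h := by field_simp
  -- continuity of the second derivative: choose δ
  obtain ⟨δ, hδpos, hδ⟩ := (Metric.continuousAt_iff (f := fderiv ℝ (fderiv ℝ F)) (a := φs)).mp hcont.continuousAt (m / 6) (by positivity)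
  refine ⟨δ, hδpos, fun φ hφne hφδ => ?_⟩
  set h : E := φ - φs with hh
  have hhne : h ≠ 0 := sub_ne_zero_of_ne hφne
  have hhδ : ‖h‖ < δ := hφδ
  set s : ℝ := ⟪v, h⟫ with hs
  set h2 : E := s • v with hh2
  have hh2le : ‖h2‖ ≤ ‖h‖ := by
    rw [hh2, norm_smul, hv, mul_one]
    calc |s| ≤ ‖v‖ * ‖h‖ := abs_real_inner_le_norm v h
      _ = ‖h‖ := by rw [hv, one_mul]
  -- the one-dimensional function g and its derivatives
  set g : ℝ → ℝ := fun t => F (φs + t • h) - 2 * F (φs + t • h2) with hg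
  set g' : ℝ → ℝ := fun t =>
    fderiv ℝ F (φs + t • h) h - 2 * fderiv ℝ F (φs + t • h2) h2 with hg'
  set g'' : ℝ → ℝ := fun t =>
    fderiv ℝ (fderiv ℝ F) (φs + t • h) h h
      - 2 * fderiv ℝ (fderiv ℝ F) (φs + t • h2) h2 h2 with hg''
  have hline : ∀ (u : E) (t : ℝ), HasDerivAt (fun t : ℝ => φs + t • u) u t := by
    intro u t
    simpa using ((hasDerivAt_id t).smul_const u).const_add φs
  have hgd : ∀ t, HasDerivAt g (g' t) t := by
    intro t
    have d1 : HasDerivAt (fun t => F (φs + t • h)) (fderiv ℝ F (φs + t • h) h) t :=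
      (hFd _).hasFDerivAt.comp_hasDerivAt t (hline h t)
    have d2 : HasDerivAt (fun t => F (φs + t • h2)) (fderiv ℝ F (φs + t • h2) h2) t :=
      (hFd _).hasFDerivAt.comp_hasDerivAt t (hline h2 t)
    exact d1.sub (d2.const_mul 2)
  have hgd' : ∀ t, HasDerivAt g' (g'' t) t := by
    intro t
    have d1 : HasDerivAt (fun t => fderiv ℝ F (φs + t • h))
        (fderiv ℝ (fderiv ℝ F) (φs + t • h) h) t :=
      (hΦd _).hasFDerivAt.comp_hasDerivAt t (hline h t)
    have d1x : HasDerivAt (fun t => fderiv ℝ F (φs + t • h) h)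
        (fderiv ℝ (fderiv ℝ F) (φs + t • h) h h) t :=
      (ContinuousLinearMap.apply ℝ ℝ h).hasFDerivAt.comp_hasDerivAt t d1
    have d2 : HasDerivAt (fun t => fderiv ℝ F (φs + t • h2))
        (fderiv ℝ (fderiv ℝ F) (φs + t • h2) h2) t :=
      (hΦd _).hasFDerivAt.comp_hasDerivAt t (hline h2 t)
    have d2x : HasDerivAt (fun t => fderiv ℝ F (φs + t • h2) h2)
        (fderiv ℝ (fderiv ℝ F) (φs + t • h2) h2 h2) t :=
      (ContinuousLinearMap.apply ℝ ℝ h2).hasFDerivAt.comp_hasDerivAt t d2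
    exact d1x.sub (d2x.const_mul 2)
  -- g' 0 = 0
  have hg'0 : g' 0 = 0 := by simp [hg', hfd0]
  -- lower bound on g'' on [0,1]
  have hnear : ∀ (u : E) (t : ℝ), t ∈ Set.Icc (0:ℝ) 1 → ‖u‖ ≤ ‖h‖ →
      ‖fderiv ℝ (fderiv ℝ F) (φs + t • u) - B‖ < m / 6 := by
    intro u t ht hu
    have : dist (φs + t • u) φs < δ := by
      rw [dist_eq_norm]
      simp only [add_sub_cancel_left]
      rw [norm_smul]
      calc |t| * ‖u‖ ≤ 1 * ‖h‖ := by
            apply mul_le_mul _ hu (norm_nonneg u) zero_le_one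
            rw [abs_le]; constructor <;> linarith [ht.1, ht.2]
        _ < δ := by rwa [one_mul]
    have := hδ this
    exact (dist_eq_norm (E := E →L[ℝ] E →L[ℝ] ℝ) (fderiv ℝ (fderiv ℝ F) (φs + t • u)) B).symm.trans_lt this
  have hBh2 : B h2 h2 = lam * s ^ 2 := by
    simp only [hh2, map_smul, ContinuousLinearMap.smul_apply, smul_eq_mul, hBvv]
    ring
  have hg''pos : ∀ t ∈ Set.Icc (0:ℝ) 1, 0 < g'' t := by
    intro t ht
    have e1 : |fderiv ℝ (fderiv ℝ F) (φs + t • h) h h - B h h| ≤ m / 6 * ‖h‖ ^ 2 :=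
      quad_bound _ B h ‖h‖ (m / 6) le_rfl (hnear h t ht le_rfl).le
    have e2 : |fderiv ℝ (fderiv ℝ F) (φs + t • h2) h2 h2 - B h2 h2| ≤ m / 6 * ‖h‖ ^ 2 :=
      quad_bound _ B h2 ‖h‖ (m / 6) hh2le (hnear h2 t ht hh2le).le
    have hqvalue : q h = B h h - 2 * B h2 h2 := by
      simp only [hq]; rw [hBh2, ← hs]; ring
    have hqm : m * ‖h‖ ^ 2 ≤ q h := hqlow h
    have hnormpos : 0 < ‖h‖ ^ 2 := pow_pos (norm_pos_iff.mpr hhne) 2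
    simp only [hg'']
    rw [abs_le] at e1 e2
    have hmx : 0 < m * ‖h‖ ^ 2 := mul_pos hmpos hnormpos
    set X := ‖h‖ ^ 2 with hX
    set A1 := fderiv ℝ (fderiv ℝ F) (φs + t • h) h h with hA1
    set A2 := fderiv ℝ (fderiv ℝ F) (φs + t • h2) h2 h2 with hA2
    set B1 := B h h with hB1
    set B2 := B h2 h2 with hB2
    set Q := q h with hQ
    clear_value X A1 A2 B1 B2 Q m
    linarith [e1.1, e2.2]
  -- conclude via strict monotonicity
  have hg'diff : Differentiable ℝ g' := fun t => (hgd' t).differentiableAt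
  have hgdiff : Differentiable ℝ g := fun t => (hgd t).differentiableAt
  have hg'mono : StrictMonoOn g' (Set.Icc 0 1) := by
    apply strictMonoOn_of_deriv_pos (convex_Icc 0 1) hg'diff.continuous.continuousOn
    intro t ht
    rw [interior_Icc] at ht
    rw [(hgd' t).deriv]
    exact hg''pos t ⟨ht.1.le, ht.2.le⟩
  have hg'pos : ∀ t ∈ Set.Ioo (0:ℝ) 1, 0 < g' t := by
    intro t ht
    have := hg'mono (Set.mem_Icc.mpr ⟨le_refl 0, zero_le_one⟩)
      (Set.mem_Icc.mpr ⟨ht.1.le, ht.2.le⟩) ht.1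
    rwa [hg'0] at this
  have hgmono : StrictMonoOn g (Set.Icc 0 1) := by
    apply strictMonoOn_of_deriv_pos (convex_Icc 0 1) hgdiff.continuous.continuousOn
    intro t ht
    rw [interior_Icc] at ht
    rw [(hgd t).deriv]
    exact hg'pos t ht
  have hkey : g 0 < g 1 := hgmono (Set.mem_Icc.mpr ⟨le_refl 0, zero_le_one⟩)
    (Set.mem_Icc.mpr ⟨zero_le_one, le_refl 1⟩) zero_lt_one
  have hg0 : g 0 = F φs - 2 * F (φs + (inner ℝ v (φs - φs) : ℝ) • v) := by
    simp [hg]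
  have hg1 : g 1 = F φ - 2 * F (φs + (inner ℝ v (φ - φs) : ℝ) • v) := by
    simp only [hg, one_smul, hh2, hs, hh]
    congr 2
    abel
  rw [← hg0, ← hg1]
  exact hkey
end

section
/- The saddle point is a strict local minimizer of the projected IMF auxiliary functional on the mass-conservation affine subspace (projected version of part (1) of the convergence theorem): let E be a finite-dimensional real inner product space, V ⊆ E a linear subspace with orthogonal projection P onto V, and F : E → ℝ twice continuously differentiable. Suppose φ* ∈ E satisfies P(∇F(φ*)) = 0, and the second derivative B of F at φ* satisfies: there exist v ∈ V with ‖v‖ = 1 and λ < 0 such that B(v, w) = λ ⟨v, w⟩ for all w ∈ V, and B(w, w) > 0 for every nonzero w ∈ V with ⟨w, v⟩ = 0. Define L(φ) = F(φ) − 2 F(φ* + ⟨v, φ − φ*⟩ · v). Then φ* is a strict local minimizer of L restricted to the affine subspace φ* + V: there is ε > 0 such that L(φ) > L(φ*) for every φ ∈ φ* + V with φ ≠ φ* and ‖φ − φ*‖ < ε. -/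
open RealInnerProductSpace

lemma taylor2_aux {E : Type*} [NormedAddCommGroup E] [NormedSpace ℝ E]
    (F : E → ℝ) (hF : ContDiff ℝ 2 F) (x : E) {ε : ℝ} (hε : 0 < ε) :
    ∃ δ > 0, ∀ w : E, ‖w‖ < δ →
      |F (x + w) - F x - fderiv ℝ F x w
        - (1/2) * fderiv ℝ (fderiv ℝ F) x w w| ≤ ε * ‖w‖ ^ 2 := by
  set f' := fderiv ℝ F with hf'
  set B := fderiv ℝ f' x with hB
  have hFd : Differentiable ℝ F := hF.differentiable (by norm_num)
  have hf'd : Differentiable ℝ f' :=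
    (hF.fderiv_right (m := 1) (by norm_num)).differentiable (by norm_num)
  have hsymm : ∀ a b : E, B a b = B b a :=
    hF.contDiffAt.isSymmSndFDerivAt (by simp)
  have hBd : HasFDerivAt f' B x := (hf'd x).hasFDerivAt
  rw [hasFDerivAt_iff_isLittleO_nhds_zero] at hBd
  have hev : ∀ᶠ u in nhds (0 : E), ‖f' (x + u) - f' x - B u‖ ≤ ε * ‖u‖ :=
    hBd.def hε
  rw [Metric.eventually_nhds_iff] at hev
  obtain ⟨δ, hδ, hbd⟩ := hev
  refine ⟨δ, hδ, fun w hw => ?_⟩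
  -- derivative of g u = F (x+u) - f' x u - (1/2) * B u u
  have hg : ∀ u : E, HasFDerivAt (fun u : E => F (x + u) - f' x u - (1/2) * B u u)
      (f' (x + u) - f' x - B u) u := by
    intro u
    have h1 : HasFDerivAt (fun u : E => F (x + u)) (f' (x + u)) u := by
      have := ((hFd (x + u)).hasFDerivAt).comp u
        ((hasFDerivAt_id u).const_add x)
      simp at this
      exact this
    have h2 : HasFDerivAt (fun u : E => f' x u) (f' x) u := (f' x).hasFDerivAt
    have h3 : HasFDerivAt (fun u : E => B u u)
        (B.precompR E u (ContinuousLinearMap.id ℝ E)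
          + B.precompL E (ContinuousLinearMap.id ℝ E) u) u :=
      B.hasFDerivAt_of_bilinear (hasFDerivAt_id u) (hasFDerivAt_id u)
    have h4 := (h1.sub h2).sub (h3.const_mul (1/2 : ℝ))
    refine h4.congr_fderiv ?_
    ext h
    simp [ContinuousLinearMap.precompR, ContinuousLinearMap.precompL, hsymm h u]
    ring
  have hbound : ∀ u ∈ Metric.closedBall (0 : E) ‖w‖,
      ‖f' (x + u) - f' x - B u‖ ≤ ε * ‖w‖ := by
    intro u hu
    rw [Metric.mem_closedBall, dist_zero_right] at hu
    calc ‖f' (x + u) - f' x - B u‖ ≤ ε * ‖u‖ := hbd (by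
          rw [dist_zero_right]; exact lt_of_le_of_lt hu hw)
      _ ≤ ε * ‖w‖ := by nlinarith
  have := Convex.norm_image_sub_le_of_norm_hasFDerivWithin_le
    (fun u hu => (hg u).hasFDerivWithinAt) hbound (convex_closedBall 0 ‖w‖)
    (Metric.mem_closedBall_self (norm_nonneg w))
    (by rw [Metric.mem_closedBall, dist_zero_right])
  simp only [add_zero, map_zero, ContinuousLinearMap.zero_apply, mul_zero, sub_zero,
    sub_self] at this
  rw [Real.norm_eq_abs] at this
  calc |F (x + w) - F x - f' x w - (1/2) * B w w|
      = |F (x + w) - f' x w - 1 / 2 * B w w - F x| := by ring_nf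
    _ ≤ ε * ‖w‖ * ‖w‖ := this
    _ = ε * ‖w‖ ^ 2 := by ring


set_option maxHeartbeats 1000000 in
/-- The saddle point is a strict local minimizer of the projected IMF auxiliary
functional on the mass-conservation affine subspace: if `P ∇F(φ*) = 0` (with `P` the
orthogonal projection onto a subspace `V`) and the second derivative of `F` at `φ*` has
on `V` a unit min-mode `v ∈ V` with eigenvalue `λ < 0` and is positive definite on the
complement of `v` within `V`, then `φ*` is a strict local minimizer of
`L(φ) = F(φ) − 2 F(φ* + ⟨v, φ − φ*⟩ • v)` restricted to the affine subspace `φ* + V`. -/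
theorem saddle_is_strict_local_min_of_aux_projected {E : Type*} [NormedAddCommGroup E]
    [InnerProductSpace ℝ E] [FiniteDimensional ℝ E]
    (V : Submodule ℝ E)
    (F : E → ℝ) (hF : ContDiff ℝ 2 F)
    (φs : E) (hcrit : V.orthogonalProjectionOnto (gradient F φs) = 0)
    (v : E) (hvV : v ∈ V) (hv : ‖v‖ = 1) (lam : ℝ) (hlam : lam < 0)
    (hev : ∀ w ∈ V, fderiv ℝ (fderiv ℝ F) φs v w = lam * ⟪v, w⟫)
    (hpos : ∀ w ∈ V, w ≠ 0 → ⟪w, v⟫ = 0 → 0 < fderiv ℝ (fderiv ℝ F) φs w w) :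
    ∃ ε > 0, ∀ φ : E, φ - φs ∈ V → φ ≠ φs → ‖φ - φs‖ < ε →
      F φs - 2 * F (φs + ⟪v, φs - φs⟫ • v) <
        F φ - 2 * F (φs + ⟪v, φ - φs⟫ • v) := by
  set B := fderiv ℝ (fderiv ℝ F) φs with hB
  have hsymm : ∀ a b : E, B a b = B b a :=
    hF.contDiffAt.isSymmSndFDerivAt (by simp)
  have hvv : ⟪v, v⟫ = (1 : ℝ) := by
    rw [real_inner_self_eq_norm_sq, hv]; norm_num
  have hBvv : B v v = lam := by rw [hev v hvV, hvv, mul_one]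
  -- the first derivative vanishes on V
  have hgrad : ∀ w ∈ V, fderiv ℝ F φs w = 0 := by
    intro w hw
    have h1 : gradient F φs ∈ Vᗮ := (Submodule.orthogonalProjectionOnto_eq_zero_iff).mp hcrit
    have h2 : fderiv ℝ F φs w = ⟪gradient F φs, w⟫ := by
      rw [gradient, ← InnerProductSpace.toDual_apply_apply,
        LinearIsometryEquiv.apply_symm_apply]
    rw [h2, real_inner_comm]
    exact (Submodule.mem_orthogonal V _).mp h1 w hw
  -- the quadratic form
  set q : E → ℝ := fun w => B (w - ⟪v, w⟫ • v) (w - ⟪v, w⟫ • v) - lam * ⟪v, w⟫ ^ 2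
    with hqdef
  -- key decomposition of B w w for w ∈ V
  have hBdec : ∀ w ∈ V, B w w = B (w - ⟪v, w⟫ • v) (w - ⟪v, w⟫ • v)
      + lam * ⟪v, w⟫ ^ 2 := by
    intro w hw
    set t := ⟪v, w⟫ with ht
    set u := w - t • v with hu
    have huV : u ∈ V := V.sub_mem hw (V.smul_mem t hvV)
    have hvu : ⟪v, u⟫ = 0 := by
      rw [hu, inner_sub_right, real_inner_smul_right, hvv]; ring
    have hBvu : B v u = 0 := by rw [hev u huV, hvu, mul_zero]
    have hBuv : B u v = 0 := by rw [hsymm, hBvu]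
    have hw' : w = u + t • v := by rw [hu]; abel
    calc B w w = B (u + t • v) (u + t • v) := by rw [← hw']
      _ = B u u + t * B u v + t * B v u + t * (t * B v v) := by
          simp [map_add, ContinuousLinearMap.map_smul, ContinuousLinearMap.add_apply,
            ContinuousLinearMap.smul_apply, smul_eq_mul]
          ring
      _ = B u u + lam * t ^ 2 := by rw [hBvu, hBuv, hBvv]; ring
  -- continuity of q
  have hk : Continuous fun w : E => w - ⟪v, w⟫ • v :=
    continuous_id.sub ((continuous_const.inner continuous_id).smul continuous_const)
  have hqc : Continuous q := by
    have h1 : Continuous fun w : E => B (w - ⟪v, w⟫ • v) (w - ⟪v, w⟫ • v) :=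
      B.isBoundedBilinearMap.continuous.comp (hk.prodMk hk)
    exact h1.sub (continuous_const.mul ((continuous_const.inner continuous_id).pow 2))
  -- compact sphere in V
  set s : Set E := (V : Set E) ∩ Metric.sphere 0 1 with hs
  have hscomp : IsCompact s :=
    (isCompact_sphere (0 : E) 1).inter_left V.closed_of_finiteDimensional
  have hsne : s.Nonempty := ⟨v, hvV, by simp [hv]⟩
  obtain ⟨w0, hw0s, hw0min⟩ := hscomp.exists_isMinOn hsne hqc.continuousOn
  set c := q w0 with hc
  have hw0V : w0 ∈ V := hw0s.1
  have hw0n : ‖w0‖ = 1 := by simpa using hw0s.2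
  -- positivity of c
  have hcpos : 0 < c := by
    set t0 := ⟪v, w0⟫ with ht0
    set u0 := w0 - t0 • v with hu0
    have hu0V : u0 ∈ V := V.sub_mem hw0V (V.smul_mem t0 hvV)
    have hu0v : ⟪u0, v⟫ = 0 := by
      rw [hu0, inner_sub_left, real_inner_smul_left, hvv, real_inner_comm]; ring
    by_cases h0 : u0 = 0
    · have hw0e : w0 = t0 • v := by
        have := h0; rw [hu0, sub_eq_zero] at this; exact this
      have ht01 : t0 ^ 2 = 1 := by
        have : ‖t0 • v‖ = 1 := by rw [← hw0e, hw0n]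
        rw [norm_smul, hv, mul_one, Real.norm_eq_abs] at this
        nlinarith [abs_nonneg t0, sq_abs t0]
      have : q w0 = -lam := by
        rw [hqdef]
        simp only [← ht0, ← hu0, h0, map_zero, ContinuousLinearMap.zero_apply, ht01]
        ring
      rw [hc, this]; linarith
    · have h1 : 0 < B u0 u0 := hpos u0 hu0V h0 hu0v
      have h2 : lam * t0 ^ 2 ≤ 0 := mul_nonpos_of_nonpos_of_nonneg hlam.le (sq_nonneg _)
      rw [hc, hqdef]
      simp only [← ht0, ← hu0]
      linarith
  -- homogeneity and lower bound of q on V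
  have hqhom : ∀ (a : ℝ) (w : E), q (a • w) = a ^ 2 * q w := by
    intro a w
    rw [hqdef]
    simp only [real_inner_smul_right]
    have : a • w - (a * ⟪v, w⟫) • v = a • (w - ⟪v, w⟫ • v) := by
      rw [smul_sub, smul_smul]
    rw [this]
    simp only [ContinuousLinearMap.map_smul, ContinuousLinearMap.smul_apply, smul_eq_mul]
    ring
  have hqlb : ∀ w ∈ V, c * ‖w‖ ^ 2 ≤ q w := by
    intro w hw
    rcases eq_or_ne w 0 with rfl | hne
    · simp [hqdef]
    · have hn : (0 : ℝ) < ‖w‖ := norm_pos_iff.mpr hne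
      set w' := ‖w‖⁻¹ • w with hw'
      have hw'V : w' ∈ V := V.smul_mem _ hw
      have hw'n : ‖w'‖ = 1 := by
        rw [hw', norm_smul, norm_inv, norm_norm, inv_mul_cancel₀ hn.ne']
      have hmin : c ≤ q w' := hw0min ⟨hw'V, by simp [hw'n]⟩
      have : q w = ‖w‖ ^ 2 * q w' := by
        have : w = ‖w‖ • w' := by
          rw [hw', smul_smul, mul_inv_cancel₀ hn.ne', one_smul]
        conv_lhs => rw [this]
        exact hqhom _ _
      rw [this]
      nlinarith
  -- Taylor expansion with ε = c/8
  have hc8 : 0 < c / 8 := div_pos hcpos (by norm_num)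
  obtain ⟨δ, hδ, htay⟩ := taylor2_aux F hF φs (ε := c / 8) hc8
  refine ⟨δ, hδ, fun φ hφV hφne hφδ => ?_⟩
  set w := φ - φs with hw
  set t := ⟪v, w⟫ with ht
  have hφ : φ = φs + w := by rw [hw]; abel
  have hwne : w ≠ 0 := sub_ne_zero.mpr hφne
  have hwpos : (0 : ℝ) < ‖w‖ := norm_pos_iff.mpr hwne
  have htle : |t| ≤ ‖w‖ := by
    calc |t| ≤ ‖v‖ * ‖w‖ := abs_real_inner_le_norm v w
      _ = ‖w‖ := by rw [hv, one_mul]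
  have htvV : t • v ∈ V := V.smul_mem t hvV
  have htvn : ‖t • v‖ = |t| := by rw [norm_smul, hv, mul_one, Real.norm_eq_abs]
  -- Taylor for w
  have hT1 : |F (φs + w) - F φs - (1/2) * B w w| ≤ c / 8 * ‖w‖ ^ 2 := by
    have := htay w hφδ
    rwa [hgrad w hφV, sub_zero] at this
  -- Taylor for t • v
  have hT2 : |F (φs + t • v) - F φs - (1/2) * (lam * t ^ 2)| ≤ c / 8 * ‖w‖ ^ 2 := by
    have h1 := htay (t • v) (lt_of_le_of_lt (by rw [htvn]; exact htle) hφδ)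
    rw [hgrad _ htvV, sub_zero] at h1
    have h2 : B (t • v) (t • v) = lam * t ^ 2 := by
      simp only [ContinuousLinearMap.map_smul, ContinuousLinearMap.smul_apply,
        smul_eq_mul, hBvv]
      ring
    rw [h2] at h1
    have h3 : ‖t • v‖ ^ 2 ≤ ‖w‖ ^ 2 := by
      rw [htvn]; nlinarith [abs_nonneg t]
    exact h1.trans (mul_le_mul_of_nonneg_left h3 hc8.le)
  -- assemble
  have hq : (1/2) * B w w - lam * t ^ 2 = (1/2) * q w := by
    rw [hqdef]
    simp only [← ht]
    rw [hBdec w hφV, ← ht]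
    ring
  have hqge : c * ‖w‖ ^ 2 ≤ q w := hqlb w hφV
  have e0 : ⟪v, φs - φs⟫ = (0 : ℝ) := by simp
  rw [e0, zero_smul, add_zero, hφ]
  have habs1 : -(c / 8 * ‖w‖ ^ 2) ≤ F (φs + w) - F φs - (1/2) * B w w :=
    neg_le_of_abs_le hT1
  have habs2 : F (φs + t • v) - F φs - (1/2) * (lam * t ^ 2) ≤ c / 8 * ‖w‖ ^ 2 :=
    le_of_abs_le hT2
  have hw2 : 0 < ‖w‖ ^ 2 := by positivity
  clear_value B q c w t
  linarith [mul_pos hcpos hw2, habs1, habs2, hq, hqge]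
end

section
/- Strict convexity of the IMF auxiliary functional near the saddle point (part (2) of the convergence theorem, with the direction frozen at the min-mode): under the hypotheses that E is a finite-dimensional real inner product space, F : E → ℝ is twice continuously differentiable, φ* is a critical point of F (∇F(φ*) = 0), and the second derivative B of F at φ* admits a unit vector v and λ < 0 with B(v, w) = λ⟨v, w⟩ for all w and B(w, w) > 0 for all nonzero w ⊥ v, the auxiliary functional L(φ) = F(φ) − 2 F(φ* + ⟨v, φ − φ*⟩ · v) is strictly convex on some open ball centered at φ*: there exists ε > 0 such that L is strictly convex on {φ : ‖φ − φ*‖ < ε}. -/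
open RealInnerProductSpace

section Aux

variable {E : Type*} [NormedAddCommGroup E] [InnerProductSpace ℝ E] [FiniteDimensional ℝ E]

lemma aux_line_deriv1 (F : E → ℝ) (hF : ContDiff ℝ 2 F) (c d : E) (t : ℝ) :
    HasDerivAt (fun t : ℝ => F (c + t • d)) (fderiv ℝ F (c + t • d) d) t := by
  have hline : HasDerivAt (fun t : ℝ => c + t • d) d t := by
    simpa using ((hasDerivAt_id t).smul_const d).const_add c
  exact ((hF.differentiable (by norm_num) (c + t • d)).hasFDerivAt).comp_hasDerivAt t hline

lemma aux_line_deriv2 (F : E → ℝ) (hF : ContDiff ℝ 2 F) (c d : E) (t : ℝ) :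
    HasDerivAt (fun t : ℝ => fderiv ℝ F (c + t • d) d)
      (fderiv ℝ (fderiv ℝ F) (c + t • d) d d) t := by
  have hline : HasDerivAt (fun t : ℝ => c + t • d) d t := by
    simpa using ((hasDerivAt_id t).smul_const d).const_add c
  have hF1 : ContDiff ℝ 1 (fderiv ℝ F) := hF.fderiv_right (by norm_num)
  have h1 : HasFDerivAt (fun φ => fderiv ℝ F φ d)
      ((ContinuousLinearMap.apply ℝ ℝ d).comp (fderiv ℝ (fderiv ℝ F) (c + t • d)))
      (c + t • d) :=
    (ContinuousLinearMap.apply ℝ ℝ d).hasFDerivAt.comp _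
      ((hF1.differentiable one_ne_zero _).hasFDerivAt)
  exact h1.comp_hasDerivAt t hline

end Aux

set_option maxHeartbeats 1000000 in
/-- Strict convexity of the IMF auxiliary functional near the saddle point (part (2) of
the convergence theorem, with the direction frozen at the min-mode): under the
nondegenerate index-1 saddle hypotheses at `φ*`, the auxiliary functional
`L(φ) = F(φ) − 2 F(φ* + ⟨v, φ − φ*⟩ • v)` is strictly convex on some open ball
centered at `φ*`. -/
theorem aux_functional_strict_convex_near_saddle {E : Type*} [NormedAddCommGroup E]
    [InnerProductSpace ℝ E] [FiniteDimensional ℝ E]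
    (F : E → ℝ) (hF : ContDiff ℝ 2 F)
    (φs : E) (hcrit : gradient F φs = 0)
    (v : E) (hv : ‖v‖ = 1) (lam : ℝ) (hlam : lam < 0)
    (hev : ∀ w : E, fderiv ℝ (fderiv ℝ F) φs v w = lam * ⟪v, w⟫)
    (hpos : ∀ w : E, w ≠ 0 → ⟪w, v⟫ = 0 → 0 < fderiv ℝ (fderiv ℝ F) φs w w) :
    ∃ ε > 0, StrictConvexOn ℝ (Metric.ball φs ε)
      (fun φ : E => F φ - 2 * F (φs + ⟪v, φ - φs⟫ • v)) := by
  classical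
  have hvne : v ≠ 0 := by
    intro h; rw [h, norm_zero] at hv; exact one_ne_zero hv.symm
  haveI : Nontrivial E := ⟨⟨v, 0, hvne⟩⟩
  set Q : E → E →L[ℝ] E →L[ℝ] ℝ := fun φ => fderiv ℝ (fderiv ℝ F) φ with hQdef
  have hF1 : ContDiff ℝ 1 (fderiv ℝ F) := hF.fderiv_right (by norm_num)
  have hQcont : Continuous Q := hF1.continuous_fderiv one_ne_zero
  set ψ : E → E := fun φ => φs + ⟪v, φ - φs⟫ • v with hψdef
  have hψcont : Continuous ψ := by
    exact continuous_const.add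
      ((continuous_const.inner (continuous_id.sub continuous_const)).smul continuous_const)
  set R : E →L[ℝ] E →L[ℝ] ℝ := (innerSL ℝ v).smulRight (innerSL ℝ v) with hRdef
  set M : E → E →L[ℝ] E →L[ℝ] ℝ := fun φ => Q φ - (2 * Q (ψ φ) v v) • R with hMdef
  have hMapp : ∀ φ w u, M φ w u = Q φ w u - 2 * Q (ψ φ) v v * (⟪v, w⟫ * ⟪v, u⟫) := by
    intro φ w u
    simp only [hMdef, ContinuousLinearMap.sub_apply, ContinuousLinearMap.smul_apply,
      smul_eq_mul, hRdef, ContinuousLinearMap.smulRight_apply, innerSL_apply_apply]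
    try ring
  have hψs : ψ φs = φs := by simp [hψdef]
  have hQvv : Q φs v v = lam := by
    have := hev v
    rw [real_inner_self_eq_norm_sq, hv] at this
    simpa using this
  have hsymm : ∀ a b : E, Q φs a b = Q φs b a := by
    have h := hF.contDiffAt.isSymmSndFDerivAt (x := φs) (by norm_num)
    exact fun a b => h a b
  -- positivity of M at φs
  have hMpos : ∀ w : E, w ≠ 0 → 0 < M φs w w := by
    intro w hw
    set a : ℝ := ⟪v, w⟫ with ha
    set u : E := w - a • v with hu
    have hvu : ⟪v, u⟫ = 0 := by
      simp [hu, inner_sub_right, inner_smul_right, real_inner_self_eq_norm_sq, hv, ha]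
    have hwdec : w = a • v + u := by simp [hu]
    have hQvu : Q φs v u = 0 := by rw [hQdef]; rw [hev u]; rw [hvu]; ring
    have hQuv : Q φs u v = 0 := by rw [hsymm u v]; exact hQvu
    have hQww : Q φs w w = lam * (a * a) + Q φs u u := by
      conv_lhs => rw [hwdec]
      simp [map_add, ContinuousLinearMap.add_apply, map_smul, ContinuousLinearMap.smul_apply,
        hQvv, hQvu, hQuv]
      ring
    have hM : M φs w w = Q φs u u + (-lam) * (a * a) := by
      rw [hMapp, hψs, hQww, hQvv, ← ha]; ring
    rw [hM]
    rcases eq_or_ne u 0 with hu0 | hu0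
    · have haz : a ≠ 0 := by
        intro h0
        apply hw
        rw [hwdec, hu0, h0, zero_smul, add_zero]
      have hq0 : Q φs u u = 0 := by rw [hu0]; simp
      have haa : 0 < a * a := mul_self_pos.mpr haz
      rw [hq0, zero_add]
      exact mul_pos (neg_pos.mpr hlam) haa
    · have h1 : 0 < Q φs u u := hpos u hu0 (by rw [real_inner_comm]; exact hvu)
      have hneg : 0 ≤ -lam * (a * a) :=
        mul_nonneg (neg_nonneg.mpr hlam.le) (mul_self_nonneg a)
      linarith
  -- coercivity constant
  have hScompact : IsCompact (Metric.sphere (0 : E) 1) := isCompact_sphere 0 1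
  have hSne : (Metric.sphere (0 : E) 1).Nonempty := NormedSpace.sphere_nonempty.mpr zero_le_one
  have hContQF : Continuous fun w => M φs w w :=
    ((M φs).continuous.clm_apply continuous_id)
  obtain ⟨w0, hw0S, hw0min⟩ := hScompact.exists_isMinOn hSne hContQF.continuousOn
  set c : ℝ := M φs w0 w0 with hc
  have hw0ne : w0 ≠ 0 := by
    intro h
    rw [Metric.mem_sphere, h, dist_zero_left, norm_zero] at hw0S
    exact one_ne_zero hw0S.symm
  have hcpos : 0 < c := hMpos w0 hw0ne
  have hcoer : ∀ w : E, c * ‖w‖ ^ 2 ≤ M φs w w := by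
    intro w
    rcases eq_or_ne w 0 with h0 | h0
    · simp [h0]
    · have hnw : (0:ℝ) < ‖w‖ := norm_pos_iff.mpr h0
      set w' : E := ‖w‖⁻¹ • w with hw'
      have hw'S : w' ∈ Metric.sphere (0 : E) 1 := by
        simp [hw', norm_smul, abs_of_pos (inv_pos.mpr hnw), inv_mul_cancel₀ hnw.ne']
      have hmin : c ≤ M φs w' w' := hw0min hw'S
      have hw2 : w = ‖w‖ • w' := by
        rw [hw', smul_smul, mul_inv_cancel₀ hnw.ne', one_smul]
      have hexp : M φs w w = (‖w‖ * ‖w‖) * M φs w' w' := by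
        conv_lhs => rw [hw2]
        simp only [map_smul, ContinuousLinearMap.smul_apply, smul_eq_mul]
        ring
      rw [hexp, sq]
      nlinarith [mul_pos hnw hnw]
  -- continuity of M, pick ε
  have hMcont : Continuous M := by
    haveI : ContinuousSub (E →L[ℝ] E →L[ℝ] ℝ) := IsTopologicalAddGroup.to_continuousSub (G := E →L[ℝ] E →L[ℝ] ℝ)
    apply hQcont.sub
    apply Continuous.fun_smul _ continuous_const
    exact continuous_const.mul
      (((hQcont.comp hψcont).clm_apply continuous_const).clm_apply continuous_const)
  have hcont_at : ∀ᶠ φ in nhds φs, ‖M φ - M φs‖ < c / 2 := by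
    have : ContinuousAt M φs := hMcont.continuousAt
    have h := (Metric.tendsto_nhds (α := E →L[ℝ] E →L[ℝ] ℝ)).mp this.tendsto (c / 2) (by linarith)
    filter_upwards [h] with φ hφ
    simpa [dist_eq_norm (E := E →L[ℝ] E →L[ℝ] ℝ)] using hφ
  obtain ⟨ε, hε, hball⟩ := Metric.eventually_nhds_iff_ball.mp hcont_at
  refine ⟨ε, hε, ?_⟩
  -- uniform positivity on the ball
  have hkey : ∀ φ ∈ Metric.ball φs ε, ∀ d : E, d ≠ 0 → 0 < M φ d d := by
    intro φ hφ d hd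
    have hnd : (0:ℝ) < ‖d‖ := norm_pos_iff.mpr hd
    have hb : ‖(M φ - M φs) d d‖ ≤ ‖M φ - M φs‖ * ‖d‖ * ‖d‖ :=
      (M φ - M φs).le_opNorm₂ d d
    have hsmall : ‖M φ - M φs‖ < c / 2 := hball _ hφ
    have hb2 : ‖M φ - M φs‖ * ‖d‖ * ‖d‖ ≤ (c / 2) * (‖d‖ * ‖d‖) := by
      rw [← mul_assoc]
      exact mul_le_mul_of_nonneg_right
        (mul_le_mul_of_nonneg_right hsmall.le (norm_nonneg d)) (norm_nonneg d)
    have hdiff : -((c / 2) * (‖d‖ * ‖d‖)) ≤ (M φ - M φs) d d := by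
      have habs : |(M φ - M φs) d d| ≤ (c / 2) * (‖d‖ * ‖d‖) := by
        rw [← Real.norm_eq_abs]; exact hb.trans hb2
      linarith [(abs_le.mp habs).1]
    have hMeq : M φ d d = M φs d d + (M φ - M φs) d d := by
      simp [ContinuousLinearMap.sub_apply]
    have hlow : c * ‖d‖ ^ 2 ≤ M φs d d := hcoer d
    rw [hMeq]
    have hsq : ‖d‖ ^ 2 = ‖d‖ * ‖d‖ := sq ‖d‖
    have h3 : 0 < (c / 2) * (‖d‖ * ‖d‖) :=
      mul_pos (by linarith) (mul_pos hnd hnd)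
    linarith
  -- strict convexity via 1-D reduction
  constructor
  · exact convex_ball φs ε
  intro x hx y hy hxy p q hp hq hpq
  set d : E := y - x with hd
  have hdne : d ≠ 0 := sub_ne_zero.mpr (Ne.symm hxy)
  set δ : ℝ := ⟪v, d⟫ with hδ
  set a0 : E := φs + ⟪v, x - φs⟫ • v with ha0
  set bb : E := δ • v with hbb
  set g : ℝ → ℝ := fun t => F (x + t • d) - 2 * F (a0 + t • bb) with hg
  have hψγ : ∀ t : ℝ, φs + ⟪v, (x + t • d) - φs⟫ • v = a0 + t • bb := by
    intro t
    have : (x + t • d) - φs = (x - φs) + t • d := by abel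
    rw [this, inner_add_right, inner_smul_right, add_smul, ha0, hbb, smul_smul]
    abel
  have hgL : ∀ t : ℝ, g t = F (x + t • d) - 2 * F (φs + ⟪v, (x + t • d) - φs⟫ • v) := by
    intro t; rw [hψγ t]
  have hγmem : ∀ t ∈ Set.Icc (0:ℝ) 1, x + t • d ∈ Metric.ball φs ε := by
    intro t ht
    have hmem := (convex_ball φs ε) hx hy (by linarith [ht.2] : (0:ℝ) ≤ 1 - t) ht.1 (by ring)
    have : (1 - t) • x + t • y = x + t • d := by
      rw [hd]; module
    rwa [this] at hmem
  have hg1' : ∀ t : ℝ, HasDerivAt g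
      (fderiv ℝ F (x + t • d) d - 2 * fderiv ℝ F (a0 + t • bb) bb) t := by
    intro t
    exact (aux_line_deriv1 F hF x d t).sub ((aux_line_deriv1 F hF a0 bb t).const_mul 2)
  have hderivg : deriv g = fun t =>
      fderiv ℝ F (x + t • d) d - 2 * fderiv ℝ F (a0 + t • bb) bb := by
    funext t; exact (hg1' t).deriv
  have hg2' : ∀ t : ℝ, HasDerivAt (deriv g)
      (Q (x + t • d) d d - 2 * Q (a0 + t • bb) bb bb) t := by
    intro t
    rw [hderivg]
    exact (aux_line_deriv2 F hF x d t).sub ((aux_line_deriv2 F hF a0 bb t).const_mul 2)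
  have hg2val : ∀ t : ℝ, deriv (deriv g) t = M (x + t • d) d d := by
    intro t
    rw [(hg2' t).deriv, hMapp]
    have hψx : ψ (x + t • d) = a0 + t • bb := hψγ t
    have hQbb : Q (a0 + t • bb) bb bb = Q (a0 + t • bb) v v * (δ * δ) := by
      rw [hbb]
      simp [map_smul, ContinuousLinearMap.smul_apply, smul_eq_mul]
      ring
    rw [hψx, hQbb]
    ring
  have hgcont : Continuous g := by
    have hFc : Continuous F := hF.continuous
    apply Continuous.sub
    · exact hFc.comp (continuous_const.add (continuous_id.smul continuous_const))
    · exact continuous_const.mul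
        (hFc.comp (continuous_const.add (continuous_id.smul continuous_const)))
  have hgsc : StrictConvexOn ℝ (Set.Icc (0:ℝ) 1) g := by
    apply strictConvexOn_of_deriv2_pos (convex_Icc 0 1) hgcont.continuousOn
    intro t ht
    rw [interior_Icc] at ht
    have hmem : x + t • d ∈ Metric.ball φs ε :=
      hγmem t ⟨le_of_lt ht.1, le_of_lt ht.2⟩
    have := hkey _ hmem d hdne
    have h2 : (deriv^[2] g) t = deriv (deriv g) t := by
      simp [Function.iterate_succ, Function.comp]
    rw [h2, hg2val t]
    exact this
  have happ := hgsc.2 (Set.left_mem_Icc.mpr zero_le_one) (Set.right_mem_Icc.mpr zero_le_one)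
    (by norm_num : (0:ℝ) ≠ 1) hp hq hpq
  have hq0 : p • (0:ℝ) + q • (1:ℝ) = q := by simp
  rw [hq0] at happ
  have hgq : g q = F (p • x + q • y) - 2 * F (φs + ⟪v, (p • x + q • y) - φs⟫ • v) := by
    have hx' : p • x + q • y = x + q • d := by
      rw [hd]
      have : p = 1 - q := by linarith
      rw [this]; module
    rw [hx', hgL q]
  have hg0 : g 0 = F x - 2 * F (φs + ⟪v, x - φs⟫ • v) := by
    have := hgL 0; simpa using this
  have hg1 : g 1 = F y - 2 * F (φs + ⟪v, y - φs⟫ • v) := by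
    have := hgL 1
    have hxy1 : x + (1:ℝ) • d = y := by rw [hd]; module
    rw [hxy1] at this
    simpa using this
  rw [hgq, hg0, hg1] at happ
  simpa [smul_eq_mul] using happ
end

section
/- Fixed points of the IMF iteration are stationary points of F (part (3) of the convergence theorem, fixed-point direction): let E be a real Hilbert space, F : E → ℝ differentiable, φ̄ ∈ E, and v ∈ E with ‖v‖ = 1. Define L(φ) = F(φ) − 2 F(φ̄ + ⟨v, φ − φ̄⟩ · v). If ∇L(φ̄) = 0 (i.e. φ̄ is a critical point of its own auxiliary functional, as holds at any fixed point of the IMF mapping), then ∇F(φ̄) = 0. -/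
open RealInnerProductSpace

/-- Fixed points of the IMF iteration are stationary points of `F` (part (3) of the
convergence theorem, fixed-point direction): let `E` be a real Hilbert space,
`F : E → ℝ` differentiable, `‖v‖ = 1`, and
`L(φ) = F(φ) − 2 F(φ̄ + ⟨v, φ − φ̄⟩ • v)`. If `∇L(φ̄) = 0`, then `∇F(φ̄) = 0`. -/
theorem imf_fixed_point_is_stationary {E : Type*} [NormedAddCommGroup E]
    [InnerProductSpace ℝ E] [CompleteSpace E]
    (F : E → ℝ) (hF : Differentiable ℝ F)
    (φbar v : E) (hv : ‖v‖ = 1)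
    (hL : gradient (fun φ : E => F φ - 2 * F (φbar + ⟪v, φ - φbar⟫ • v)) φbar = 0) :
    gradient F φbar = 0 := by
  set G := fderiv ℝ F φbar with hGdef
  set D : E →L[ℝ] E := (innerSL ℝ v).smulRight v with hDdef
  -- derivative of the inner map
  have hinner : HasFDerivAt (fun φ : E => (⟪v, φ - φbar⟫ : ℝ)) (innerSL ℝ v) φbar := by
    have h1 : HasFDerivAt (fun φ : E => φ - φbar)
        (ContinuousLinearMap.id ℝ E) φbar := (hasFDerivAt_id φbar).sub_const φbar
    have h2 := HasFDerivAt.comp φbar ((innerSL ℝ v).hasFDerivAt) h1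
    exact h2
  have hg : HasFDerivAt (fun φ : E => φbar + (⟪v, φ - φbar⟫ : ℝ) • v) D φbar := by
    exact (hinner.smul_const v).const_add φbar
  have hgval : φbar + (⟪v, φbar - φbar⟫ : ℝ) • v = φbar := by simp
  have hFg : HasFDerivAt (fun φ : E => F (φbar + (⟪v, φ - φbar⟫ : ℝ) • v))
      (G.comp D) φbar := by
    have hF' : HasFDerivAt F G (φbar + (⟪v, φbar - φbar⟫ : ℝ) • v) := by
      rw [hgval]; exact (hF φbar).hasFDerivAt
    exact hF'.comp φbar hg
  have hLder : HasFDerivAt (fun φ : E => F φ - 2 * F (φbar + (⟪v, φ - φbar⟫ : ℝ) • v))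
      (G - (2 : ℝ) • G.comp D) φbar :=
    (hF φbar).hasFDerivAt.sub (hFg.const_mul 2)
  have hfd : fderiv ℝ (fun φ : E => F φ - 2 * F (φbar + (⟪v, φ - φbar⟫ : ℝ) • v)) φbar
      = G - (2 : ℝ) • G.comp D := hLder.fderiv
  have hfd0 : G - (2 : ℝ) • G.comp D = 0 := by
    rw [← hfd]
    have : fderiv ℝ (fun φ : E => F φ - 2 * F (φbar + (⟪v, φ - φbar⟫ : ℝ) • v)) φbar
        = (InnerProductSpace.toDual ℝ E)
            (gradient (fun φ : E => F φ - 2 * F (φbar + (⟪v, φ - φbar⟫ : ℝ) • v)) φbar) := by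
      rw [gradient]; simp
    rw [this, hL]
    simp
  have hkey : ∀ h : E, G h = 2 * ⟪v, h⟫ * G v := by
    intro h
    have := congrFun (congrArg DFunLike.coe hfd0) h
    simp [hDdef, ContinuousLinearMap.smulRight_apply, real_inner_smul_right,
      mul_comm, mul_assoc, sub_eq_zero] at this
    linarith [this]
  have hGv : G v = 0 := by
    have := hkey v
    rw [real_inner_self_eq_norm_sq, hv] at this
    norm_num at this
    linarith
  have hG0 : G = 0 := by
    ext h
    simp [hkey h, hGv]
  rw [gradient, hGdef] at *
  rw [hG0]
  simp
end

section
/- Fixed points of the projected IMF iteration are projected stationary points of F: let E be a real Hilbert space, P : E → E a symmetric linear map (⟨P a, b⟩ = ⟨a, P b⟩ for all a, b), F : E → ℝ differentiable, φ̄ ∈ E, and v ∈ E with P v = v and ‖v‖ = 1. Define L(φ) = F(φ) − 2 F(φ̄ + ⟨v, φ − φ̄⟩ · v). If P(∇L(φ̄)) = 0 (the first-order condition at a fixed point of the projected IMF mapping), then P(∇F(φ̄)) = 0. -/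
open RealInnerProductSpace

/-- Fixed points of the projected IMF iteration are projected stationary points of `F`:
let `E` be a real Hilbert space, `P` a symmetric linear map, `F : E → ℝ` differentiable,
`P v = v`, `‖v‖ = 1`, and `L(φ) = F(φ) − 2 F(φ̄ + ⟪v, φ − φ̄⟫ • v)`.
If `P ∇L(φ̄) = 0`, then `P ∇F(φ̄) = 0`. -/
theorem projected_imf_fixed_point_is_stationary {E : Type*} [NormedAddCommGroup E]
    [InnerProductSpace ℝ E] [CompleteSpace E]
    (P : E →ₗ[ℝ] E) (hPsymm : ∀ a b : E, ⟪P a, b⟫ = ⟪a, P b⟫)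
    (F : E → ℝ) (hF : Differentiable ℝ F)
    (φbar v : E) (hPv : P v = v) (hv : ‖v‖ = 1)
    (hL : P (gradient (fun φ : E => F φ - 2 * F (φbar + ⟪v, φ - φbar⟫ • v)) φbar) = 0) :
    P (gradient F φbar) = 0 := by
  set G := gradient F φbar with hG
  have hFg : HasGradientAt F G φbar := (hF φbar).hasGradientAt
  -- derivative of the affine map A φ = φbar + ⟪v, φ - φbar⟫ • v
  have hinner : HasFDerivAt (fun φ : E => ⟪v, φ - φbar⟫) (innerSL ℝ v) φbar := by
    have h2 : HasFDerivAt (fun φ : E => ⟪v, φ⟫) (innerSL ℝ v) φbar :=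
      (innerSL ℝ v).hasFDerivAt
    simpa [inner_sub_right, inner_add_right, inner_neg_right, sub_eq_add_neg] using h2.sub_const ⟪v, φbar⟫
  have hA : HasFDerivAt (fun φ : E => φbar + ⟪v, φ - φbar⟫ • v)
      ((innerSL ℝ v).smulRight v) φbar := by
    simpa using (hinner.smul_const v).const_add φbar
  have hcompF : HasFDerivAt (fun φ : E => F (φbar + ⟪v, φ - φbar⟫ • v))
      ((InnerProductSpace.toDual ℝ E G).comp ((innerSL ℝ v).smulRight v)) φbar := by
    have hpt : φbar + ⟪v, φbar - φbar⟫ • v = φbar := by simp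
    have hF' : HasFDerivAt F (InnerProductSpace.toDual ℝ E G)
        (φbar + ⟪v, φbar - φbar⟫ • v) := by
      rw [hpt]; exact hFg.hasFDerivAt
    exact hF'.comp φbar hA
  have hLd : HasFDerivAt (fun φ : E => F φ - 2 * F (φbar + ⟪v, φ - φbar⟫ • v))
      (InnerProductSpace.toDual ℝ E G -
        (2 : ℝ) • (InnerProductSpace.toDual ℝ E G).comp ((innerSL ℝ v).smulRight v)) φbar :=
    hFg.hasFDerivAt.sub (hcompF.const_mul 2)
  have hLd' : HasGradientAt (fun φ : E => F φ - 2 * F (φbar + ⟪v, φ - φbar⟫ • v))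
      (G - (2 * ⟪G, v⟫) • v) φbar := by
    rw [hasGradientAt_iff_hasFDerivAt]
    refine hLd.congr_fderiv ?_
    ext h
    simp [inner_sub_left, inner_smul_left, real_inner_comm G v, mul_comm, mul_assoc,
      mul_left_comm]
  have hgradL : gradient (fun φ : E => F φ - 2 * F (φbar + ⟪v, φ - φbar⟫ • v)) φbar
      = G - (2 * ⟪G, v⟫) • v := hLd'.gradient
  rw [hgradL] at hL
  have hPG : P G = (2 * ⟪G, v⟫) • v := by
    have := hL
    rw [map_sub, map_smul, hPv, sub_eq_zero] at this
    exact this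
  have hinnPG : ⟪P G, v⟫ = ⟪G, v⟫ := by
    rw [hPsymm, hPv]
  have hkey : ⟪G, v⟫ = 2 * ⟪G, v⟫ := by
    have := hinnPG
    rw [hPG, inner_smul_left] at this
    have hvv : ⟪v, v⟫ = (1 : ℝ) := by
      rw [real_inner_self_eq_norm_sq, hv]; norm_num
    simp [hvv, hv] at this
    linarith
  have hzero : ⟪G, v⟫ = 0 := by linarith
  rw [hPG, hzero]; simp
end
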